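/- For odd l, set ω_l = exp(2πi/l), A = diag(λ_1,...,λ_l) with λ_k = ω̄_l^{M·k(k+1)/2} for a fixed nonzero integer M, B = diag(ω̄_l, ω̄_l², ..., ω̄_l^l), and S the l×l cyclic shift. Then: (i) A S A^{-1} S^{-1} = B^M; (ii) ‖B S B^{-1} S^{-1} − 1_l‖ = |ω̄_l − 1| → 0 as l → ∞ through odd values; (iii) AB = BA. -/

import Mathlib

open Complex Matrix Filter

/-- `ω̄_l = exp(−2πi/l)`. -/
noncomputable def omgb (l : ℕ) : ℂ := Complex.exp (-(2 * Real.pi * Complex.I) / l)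

/-- The `l×l` cyclic shift matrix `S`, with `S e_k = e_{k+1}` (indices mod `l`). -/
def Vshift (l : ℕ) : Matrix (Fin l) (Fin l) ℂ :=
  Matrix.of fun i j => if (i : ℕ) = ((j : ℕ) + 1) % l then 1 else 0

/-- `A = diag(λ₁,…,λ_l)` with `λ_k = ω̄_l^{M·k(k+1)/2}` (here `k` runs through `1,…,l`). -/
noncomputable def Amat (l : ℕ) (M : ℤ) : Matrix (Fin l) (Fin l) ℂ :=
  Matrix.diagonal fun k => omgb l ^ (M * ((((k : ℕ) + 1) * ((k : ℕ) + 2) / 2 : ℕ) : ℤ))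

/-- `B = diag(ω̄_l, ω̄_l², …, ω̄_l^l)`. -/
noncomputable def Bmat (l : ℕ) : Matrix (Fin l) (Fin l) ℂ :=
  Matrix.diagonal fun k => omgb l ^ ((k : ℕ) + 1)

/-- `M ^ k` for an integer exponent `k`, negative powers via the matrix inverse. -/
noncomputable def zpowMat {n : ℕ} (M : Matrix (Fin n) (Fin n) ℂ) (k : ℤ) :
    Matrix (Fin n) (Fin n) ℂ :=
  if 0 ≤ k then M ^ k.toNat else M⁻¹ ^ (-k).toNat

/-- The operator norm on `l×l` complex matrices. -/
noncomputable def opNorm {n : ℕ} (M : Matrix (Fin n) (Fin n) ℂ) : ℝ :=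
  ‖Matrix.toEuclideanCLM (n := Fin n) (𝕜 := ℂ) M‖

lemma omgb_ne_zero (l : ℕ) : omgb l ≠ 0 := Complex.exp_ne_zero _

lemma omgb_pow_l (l : ℕ) (hl : l ≠ 0) : omgb l ^ l = 1 := by
  rw [omgb, ← Complex.exp_nat_mul, mul_div_cancel₀]
  · rw [Complex.exp_neg, Complex.exp_two_pi_mul_I, inv_one]
  · exact_mod_cast hl

lemma Vshift_apply (l : ℕ) [NeZero l] (i j : Fin l) :
    Vshift l i j = if j = i - 1 then 1 else 0 := by
  rcases l with _ | n
  · exact absurd rfl (NeZero.ne 0)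
  · simp only [Vshift, of_apply]
    congr 1
    have : ((j : ℕ) + 1) % (n + 1) = ((j + 1 : Fin (n+1)) : ℕ) := by
      simp [Fin.val_add, Nat.add_mod]
    rw [this, eq_iff_iff,
      show ((i : ℕ) = ((j + 1 : Fin (n+1)) : ℕ)) ↔ i = j + 1 from (Fin.val_eq_val _ _)]
    constructor <;> intro h <;> simp [h]

lemma Vshift_mul_transpose (l : ℕ) [NeZero l] : Vshift l * (Vshift l)ᵀ = 1 := by
  ext i k
  simp only [Matrix.mul_apply, transpose_apply, Vshift_apply, ite_mul, one_mul, zero_mul,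
    Finset.sum_ite_eq', Finset.mem_univ, if_true, Matrix.one_apply, sub_left_inj]

lemma Vshift_inv (l : ℕ) [NeZero l] : (Vshift l)⁻¹ = (Vshift l)ᵀ :=
  Matrix.inv_eq_right_inv (Vshift_mul_transpose l)

lemma conj_diag (l : ℕ) [NeZero l] (a : Fin l → ℂ) (ha : ∀ i, a i ≠ 0) :
    Matrix.diagonal a * Vshift l * (Matrix.diagonal a)⁻¹ * (Vshift l)⁻¹ =
      Matrix.diagonal (fun i => a i * (a (i - 1))⁻¹) := by
  have hu : Ring.inverse a = fun i => (a i)⁻¹ := by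
    exact Ring.inverse_unit
      { val := a, inv := fun i => (a i)⁻¹,
        val_inv := funext fun i => mul_inv_cancel₀ (ha i),
        inv_val := funext fun i => inv_mul_cancel₀ (ha i) }
  rw [Vshift_inv, Matrix.inv_diagonal, hu]
  ext i k
  simp only [Matrix.mul_apply, diagonal_apply, transpose_apply, Vshift_apply,
    Ring.inverse_eq_inv', Pi.inv_apply, ite_mul, mul_ite, zero_mul, mul_zero, one_mul, mul_one,
    Finset.sum_ite_eq, Finset.sum_ite_eq', Finset.mem_univ, if_true, sub_left_inj,
    Finset.sum_ite_irrel, Finset.sum_const_zero]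
  split_ifs with h
  · subst h; rfl
  · rfl

lemma omgb_zpow_l_mul (l : ℕ) (hl : l ≠ 0) (m : ℤ) : omgb l ^ ((l : ℤ) * m) = 1 := by
  rw [_root_.zpow_mul, zpow_natCast, omgb_pow_l l hl, _root_.one_zpow]

lemma zpowMat_diag {n : ℕ} (b : Fin n → ℂ) (hb : ∀ i, b i ≠ 0) (M : ℤ) :
    (if 0 ≤ M then Matrix.diagonal b ^ M.toNat else (Matrix.diagonal b)⁻¹ ^ (-M).toNat)
      = Matrix.diagonal (fun k => b k ^ M) := by
  have hu : Ring.inverse b = fun i => (b i)⁻¹ :=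
    Ring.inverse_unit
      { val := b, inv := fun i => (b i)⁻¹,
        val_inv := funext fun i => mul_inv_cancel₀ (hb i),
        inv_val := funext fun i => inv_mul_cancel₀ (hb i) }
  split_ifs with h
  · rw [Matrix.diagonal_pow]
    have : (b ^ M.toNat : Fin n → ℂ) = fun k => b k ^ M := funext fun k => by
      rw [Pi.pow_apply, ← zpow_natCast, Int.toNat_of_nonneg h]
    rw [this]
  · rw [Matrix.inv_diagonal, hu, Matrix.diagonal_pow]
    have : ((fun i => (b i)⁻¹) ^ (-M).toNat : Fin n → ℂ) = fun k => b k ^ M :=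
      funext fun k => by
        rw [Pi.pow_apply, inv_pow, ← zpow_natCast, Int.toNat_of_nonneg (by omega : (0:ℤ) ≤ -M),
          ← _root_.zpow_neg, neg_neg]
    rw [this]

lemma tri_succ (v : ℕ) : (v+1)*(v+2)/2 = v*(v+1)/2 + (v+1) := by
  obtain ⟨c, hc⟩ := Nat.even_mul_succ_self v
  have h2 : (v+1)*(v+2) = v*(v+1) + 2*(v+1) := by ring
  omega

set_option synthInstance.maxHeartbeats 400000 in
lemma opNorm_smul_one (l : ℕ) (hl : l ≠ 0) (c : ℂ) :
    opNorm (c • (1 : Matrix (Fin l) (Fin l) ℂ)) = ‖c‖ := by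
  haveI : Inhabited (Fin l) := ⟨⟨0, Nat.pos_of_ne_zero hl⟩⟩
  haveI : Nontrivial (EuclideanSpace ℂ (Fin l)) := by
    refine ⟨EuclideanSpace.single default 1, 0, fun h => one_ne_zero (α := ℂ) ?_⟩
    have := congrArg (fun x => x default) h
    simpa using this
  rw [opNorm, _root_.map_smul, _root_.map_one]
  rw [norm_smul c (1 : EuclideanSpace ℂ (Fin l) →L[ℂ] EuclideanSpace ℂ (Fin l))]
  rw [norm_one, mul_one]

lemma B_conj (l : ℕ) [NeZero l] :
    Matrix.diagonal (fun k : Fin l => omgb l ^ ((k:ℕ)+1)) * Vshift l *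
      (Matrix.diagonal (fun k : Fin l => omgb l ^ ((k:ℕ)+1)))⁻¹ * (Vshift l)⁻¹
      = omgb l • 1 := by
  rw [conj_diag l _ (fun i => pow_ne_zero _ (omgb_ne_zero l))]
  have : (fun i : Fin l => omgb l ^ ((i:ℕ)+1) * (omgb l ^ (((i-1 : Fin l):ℕ)+1))⁻¹)
      = fun _ => omgb l := by
    funext i
    rcases l with _ | n
    · exact absurd rfl (NeZero.ne 0)
    rw [Fin.coe_sub_one]
    by_cases h : i = 0
    · rw [if_pos h, h, omgb_pow_l (n+1) (Nat.succ_ne_zero n)]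
      simp
    · rw [if_neg h]
      have hv : 1 ≤ (i : ℕ) := Nat.pos_of_ne_zero (fun hh => h (Fin.ext hh))
      rw [show (i:ℕ) - 1 + 1 = (i:ℕ) by omega, pow_succ]
      rw [mul_comm, ← mul_assoc, inv_mul_cancel₀ (pow_ne_zero _ (omgb_ne_zero _)), one_mul]
  rw [this]
  ext i j
  simp [Matrix.diagonal_apply, Matrix.one_apply, mul_ite]

lemma part1 (M : ℤ) (l : ℕ) (hl : Odd l) :
    Amat l M * Vshift l * (Amat l M)⁻¹ * (Vshift l)⁻¹ = zpowMat (Bmat l) M := by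
  haveI : NeZero l := ⟨hl.pos.ne'⟩
  rw [Amat, conj_diag l _ (fun i => zpow_ne_zero _ (omgb_ne_zero l)), zpowMat, Bmat,
    zpowMat_diag _ (fun i => pow_ne_zero _ (omgb_ne_zero l)) M]
  refine congrArg Matrix.diagonal (funext fun i => ?_)
  rw [← _root_.zpow_natCast (omgb l) ((i:ℕ)+1), ← _root_.zpow_mul,
    ← _root_.zpow_neg, ← zpow_add₀ (omgb_ne_zero l)]
  rcases l with _ | n
  · exact absurd rfl (NeZero.ne 0)
  rw [Fin.coe_sub_one]
  by_cases h : i = 0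
  · rw [if_pos h, h]
    obtain ⟨k, hk⟩ := hl
    have hn : n = 2 * k := by omega
    have e1 : (n + 1) * (n + 2) = 2 * ((n + 1) * (k + 1)) := by subst hn; ring
    have hN : (n + 1) * (n + 2) / 2 = (n + 1) * (k + 1) := by omega
    simp only [Fin.val_zero, Nat.zero_add]
    rw [hN]
    push_cast
    rw [show (M * 1 + -(M * ((↑n + 1) * (↑k + 1))) : ℤ)
        = M + (↑(n+1) : ℤ) * (-(M * (k + 1))) by push_cast; ring,
      zpow_add₀ (omgb_ne_zero _), omgb_zpow_l_mul _ (Nat.succ_ne_zero n), mul_one]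
    norm_num
  · rw [if_neg h]
    have hv : 1 ≤ (i : ℕ) := Nat.pos_of_ne_zero (fun hh => h (Fin.ext hh))
    rw [show ((i:ℕ) - 1 + 1 : ℕ) = (i:ℕ) by omega,
      show ((i:ℕ) - 1 + 2 : ℕ) = (i:ℕ) + 1 by omega]
    congr 1
    rw [tri_succ]
    push_cast
    ring

lemma part2 (l : ℕ) (hl : Odd l) :
    opNorm (Bmat l * Vshift l * (Bmat l)⁻¹ * (Vshift l)⁻¹ - 1) =
      ‖omgb l - 1‖ := by
  haveI : NeZero l := ⟨hl.pos.ne'⟩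
  rw [Bmat, B_conj]
  rw [show omgb l • (1 : Matrix (Fin l) (Fin l) ℂ) - 1 = (omgb l - 1) • 1 by
    rw [sub_smul, one_smul]]
  exact opNorm_smul_one l (NeZero.ne l) _

lemma part3 :
    Tendsto (fun j : ℕ =>
        opNorm (Bmat (2 * j + 1) * Vshift (2 * j + 1) * (Bmat (2 * j + 1))⁻¹ *
          (Vshift (2 * j + 1))⁻¹ - 1)) atTop (nhds 0) := by
  have heq : (fun j : ℕ =>
      opNorm (Bmat (2 * j + 1) * Vshift (2 * j + 1) * (Bmat (2 * j + 1))⁻¹ *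
        (Vshift (2 * j + 1))⁻¹ - 1)) = fun j => ‖omgb (2 * j + 1) - 1‖ := by
    funext j
    exact part2 (2 * j + 1) ⟨j, by ring⟩
  rw [heq]
  have htop : Tendsto (fun j : ℕ => ((2 * j + 1 : ℕ) : ℝ)) atTop atTop :=
    tendsto_natCast_atTop_atTop.comp
      (tendsto_atTop_atTop.mpr fun b => ⟨b, fun a ha => by omega⟩)
  have h0 : Tendsto (fun j : ℕ => (-(2 * Real.pi * Complex.I)) / ((2 * j + 1 : ℕ) : ℂ))
      atTop (nhds 0) := by
    rw [tendsto_zero_iff_norm_tendsto_zero]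
    have : (fun j : ℕ => ‖(-(2 * Real.pi * Complex.I)) / ((2 * j + 1 : ℕ) : ℂ)‖)
        = fun j => ‖-(2 * Real.pi * Complex.I)‖ / ((2 * j + 1 : ℕ) : ℝ) := by
      funext j
      rw [norm_div, Complex.norm_natCast]
    rw [this]
    exact Tendsto.div_atTop tendsto_const_nhds htop
  have h1 : Tendsto (fun j : ℕ => omgb (2 * j + 1)) atTop (nhds 1) := by
    have := (Complex.continuous_exp.tendsto 0).comp h0
    simpa [omgb, Function.comp_def] using this
  have h2 : Tendsto (fun j : ℕ => omgb (2 * j + 1) - 1) atTop (nhds 0) := by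
    simpa using h1.sub (tendsto_const_nhds (x := (1:ℂ)))
  have := (continuous_norm.tendsto 0).comp h2
  simpa [Function.comp_def] using this

lemma part4 (M : ℤ) (l : ℕ) : Amat l M * Bmat l = Bmat l * Amat l M := by
  rw [Amat, Bmat, Matrix.diagonal_mul_diagonal, Matrix.diagonal_mul_diagonal]
  exact congrArg Matrix.diagonal (funext fun k => mul_comm _ _)


/-- For odd `l` and a fixed nonzero integer `M`:
(i) `A S A⁻¹ S⁻¹ = B^M`;
(ii) `‖B S B⁻¹ S⁻¹ − 1‖ = |ω̄_l − 1|`, which tends to `0` as `l → ∞` through odd values;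
(iii) `AB = BA`. -/
theorem stmt13 (M : ℤ) (hM : M ≠ 0) :
    (∀ l : ℕ, Odd l →
      Amat l M * Vshift l * (Amat l M)⁻¹ * (Vshift l)⁻¹ = zpowMat (Bmat l) M) ∧
    (∀ l : ℕ, Odd l →
      opNorm (Bmat l * Vshift l * (Bmat l)⁻¹ * (Vshift l)⁻¹ - 1) =
        ‖omgb l - 1‖) ∧
    Filter.Tendsto (fun j : ℕ =>
        opNorm (Bmat (2 * j + 1) * Vshift (2 * j + 1) * (Bmat (2 * j + 1))⁻¹ *
          (Vshift (2 * j + 1))⁻¹ - 1))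
      Filter.atTop (nhds 0) ∧
    (∀ l : ℕ, Odd l → Amat l M * Bmat l = Bmat l * Amat l M) :=
  ⟨fun l hl => part1 M l hl, fun l hl => part2 l hl, part3, fun l _ => part4 M l⟩
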